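/- For the triangular lattice: if S ⊆ ℤ² contains no two triangularly adjacent points, then the upper density of S is at most 1/3; moreover the set {x ∈ ℤ² : 3 ∣ (x₁ + x₂)} contains no two triangularly adjacent points and has density exactly 1/3. (Hence δ₆(0) = 1/3.) -/

import Mathlib

open Filter Topology

/-- `y` is triangularly adjacent to `x` (triangular lattice modeled on `ℤ²`). -/
def IsTriNbr (x y : ℤ × ℤ) : Prop :=
  y - x ∈ ({(1, 0), (-1, 0), (0, 1), (0, -1), (1, 1), (-1, -1)} : Set (ℤ × ℤ))

/-- The box `B_r = {x : |x₁| < r, |x₂| < r}`. -/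
def box (r : ℕ) : Set (ℤ × ℤ) :=
  {x | |x.1| < (r : ℤ) ∧ |x.2| < (r : ℤ)}

/-- The upper density of `S ⊆ ℤ²`: `limsup_{r → ∞} |S ∩ B_r| / (2r-1)²`. -/
noncomputable def upperDensity (S : Set (ℤ × ℤ)) : ℝ :=
  limsup (fun r : ℕ => (Set.ncard (S ∩ box r) : ℝ) / (2 * (r : ℝ) - 1) ^ 2) atTop

/-- `S` has density `d`: the sequence `|S ∩ B_r| / (2r-1)²` tends to `d`. -/
def HasDensity (S : Set (ℤ × ℤ)) (d : ℝ) : Prop :=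
  Tendsto (fun r : ℕ => (Set.ncard (S ∩ box r) : ℝ) / (2 * (r : ℝ) - 1) ^ 2) atTop (𝓝 d)

/-- Counting a residue class mod 3 in an open integer interval. -/
lemma row_count (a b c : ℤ) (h : a < b) :
    b - a - 3 ≤ 3 * (((Finset.Ioo a b).filter (fun y => (c + y) % 3 = 0)).card : ℤ) ∧
    3 * (((Finset.Ioo a b).filter (fun y => (c + y) % 3 = 0)).card : ℤ) ≤ b - a + 1 := by
  have himg : (Finset.Ioo a b).filter (fun y => (c + y) % 3 = 0)
      = (Finset.Ico ((a + c + 3)/3) ((b + c + 2)/3)).image (fun m => 3*m - c) := by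
    ext y
    simp only [Finset.mem_filter, Finset.mem_Ioo, Finset.mem_Ico, Finset.mem_image]
    constructor
    · rintro ⟨⟨h1, h2⟩, h3⟩
      exact ⟨(y + c)/3, by omega, by omega⟩
    · rintro ⟨m, ⟨h1, h2⟩, rfl⟩
      omega
  rw [himg, Finset.card_image_of_injective _ (fun m1 m2 hm => by omega), Int.card_Ico]
  omega

/-- The finite version of `{3 ∣ x+y} ∩ B_r`. -/
noncomputable def Fsq (r : ℕ) : Finset (ℤ × ℤ) :=
  ((Finset.Ioo (-(r:ℤ)) (r:ℤ)) ×ˢ (Finset.Ioo (-(r:ℤ)) (r:ℤ))).filter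
    (fun p => (p.1 + p.2) % 3 = 0)

lemma Fsq_coe (r : ℕ) : {x : ℤ × ℤ | 3 ∣ (x.1 + x.2)} ∩ box r = ↑(Fsq r) := by
  ext x
  simp only [Fsq, Set.mem_inter_iff, Set.mem_setOf_eq, box, Finset.coe_filter,
    Finset.mem_product, Finset.mem_Ioo, abs_lt, Int.dvd_iff_emod_eq_zero]
  constructor
  · rintro ⟨h1, ⟨h2, h3⟩⟩; exact ⟨⟨⟨by omega, by omega⟩, ⟨by omega, by omega⟩⟩, h1⟩
  · rintro ⟨⟨⟨h2, h3⟩, ⟨h4, h5⟩⟩, h1⟩; exact ⟨h1, ⟨by omega, by omega⟩, ⟨by omega, by omega⟩⟩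

lemma Fsq_card (r : ℕ) (hr : 1 ≤ r) :
    (2*(r:ℤ)-1) * (2*(r:ℤ)-3) ≤ 3 * ((Fsq r).card : ℤ) ∧
    3 * ((Fsq r).card : ℤ) ≤ (2*(r:ℤ)-1) * (2*(r:ℤ)+1) := by
  classical
  have hbu : Fsq r = (Finset.Ioo (-(r:ℤ)) (r:ℤ)).biUnion
      (fun x => ((Finset.Ioo (-(r:ℤ)) (r:ℤ)).filter (fun y => (x + y) % 3 = 0)).image
        (fun y => (x, y))) := by
    ext p
    simp only [Fsq, Finset.mem_filter, Finset.mem_product, Finset.mem_biUnion,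
      Finset.mem_image, Finset.mem_Ioo]
    constructor
    · rintro ⟨⟨h1, h2⟩, h3⟩
      exact ⟨p.1, h1, p.2, ⟨h2, h3⟩, rfl⟩
    · rintro ⟨x, hx, y, ⟨hy, h3⟩, rfl⟩
      exact ⟨⟨hx, hy⟩, h3⟩
  have hdisj : ∀ x ∈ (Finset.Ioo (-(r:ℤ)) (r:ℤ)), ∀ y ∈ (Finset.Ioo (-(r:ℤ)) (r:ℤ)), x ≠ y →
      Disjoint (((Finset.Ioo (-(r:ℤ)) (r:ℤ)).filter (fun z => (x + z) % 3 = 0)).image (fun z => (x, z)))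
        (((Finset.Ioo (-(r:ℤ)) (r:ℤ)).filter (fun z => (y + z) % 3 = 0)).image (fun z => (y, z))) := by
    intro x _ y _ hxy
    simp only [Finset.disjoint_left, Finset.mem_image, Finset.mem_filter]
    rintro p ⟨z, _, rfl⟩ ⟨w, _, hw⟩
    exact hxy (congrArg Prod.fst hw).symm
  rw [hbu, Finset.card_biUnion hdisj]
  have hrow : ∀ x : ℤ, (((Finset.Ioo (-(r:ℤ)) (r:ℤ)).filter (fun z => (x + z) % 3 = 0)).image
      (fun z => (x, z))).card = ((Finset.Ioo (-(r:ℤ)) (r:ℤ)).filter (fun z => (x + z) % 3 = 0)).card := by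
    intro x
    exact Finset.card_image_of_injective _ (fun a b hab => (Prod.mk.injEq _ _ _ _).mp hab |>.2
      |> fun h => h)
  have hcast : ((∑ x ∈ Finset.Ioo (-(r:ℤ)) (r:ℤ), (((Finset.Ioo (-(r:ℤ)) (r:ℤ)).filter
      (fun z => (x + z) % 3 = 0)).image (fun z => (x, z))).card : ℕ) : ℤ)
      = ∑ x ∈ Finset.Ioo (-(r:ℤ)) (r:ℤ), (((Finset.Ioo (-(r:ℤ)) (r:ℤ)).filter
      (fun z => (x + z) % 3 = 0)).card : ℤ) := by
    push_cast [hrow]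
    rfl
  rw [hcast]
  have hb : ∀ x ∈ Finset.Ioo (-(r:ℤ)) (r:ℤ),
      2*(r:ℤ) - 3 ≤ 3 * (((Finset.Ioo (-(r:ℤ)) (r:ℤ)).filter (fun z => (x + z) % 3 = 0)).card : ℤ) ∧
      3 * (((Finset.Ioo (-(r:ℤ)) (r:ℤ)).filter (fun z => (x + z) % 3 = 0)).card : ℤ) ≤ 2*(r:ℤ) + 1 := by
    intro x _
    have := row_count (-(r:ℤ)) (r:ℤ) x (by exact_mod_cast by omega)
    constructor <;> [linarith [this.1]; linarith [this.2]]
  have hcard : (Finset.Ioo (-(r:ℤ)) (r:ℤ)).card = 2*r - 1 := by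
    rw [Int.card_Ioo]; omega
  have hc2 : ((Finset.Ioo (-(r:ℤ)) (r:ℤ)).card : ℤ) = 2*(r:ℤ) - 1 := by
    rw [hcard]; omega
  constructor
  · have hsum : ∑ _x ∈ Finset.Ioo (-(r:ℤ)) (r:ℤ), (2*(r:ℤ)-3) = (2*(r:ℤ)-1) * (2*(r:ℤ)-3) := by
      rw [Finset.sum_const, nsmul_eq_mul, hc2]
    refine le_trans (le_of_eq hsum.symm) ?_
    rw [Finset.mul_sum]
    exact Finset.sum_le_sum (fun x hx => (hb x hx).1)
  · have hsum : ∑ _x ∈ Finset.Ioo (-(r:ℤ)) (r:ℤ), (2*(r:ℤ)+1) = (2*(r:ℤ)-1) * (2*(r:ℤ)+1) := by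
      rw [Finset.sum_const, nsmul_eq_mul, hc2]
    refine le_trans ?_ (le_of_eq hsum)
    rw [Finset.mul_sum]
    exact Finset.sum_le_sum (fun x hx => (hb x hx).2)

lemma tendsto_aux : Tendsto (fun r : ℕ => (3*(2*(r:ℝ)-1))⁻¹) atTop (𝓝 0) := by
  apply Filter.Tendsto.inv_tendsto_atTop
  refine tendsto_atTop_mono' atTop ?_ (tendsto_natCast_atTop_atTop (R := ℝ))
  filter_upwards [eventually_ge_atTop 1] with r hr
  have : (1:ℝ) ≤ r := by exact_mod_cast hr
  nlinarith

lemma hasDensity_third : HasDensity {x : ℤ × ℤ | 3 ∣ (x.1 + x.2)} (1/3) := by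
  have hL : Tendsto (fun r : ℕ => 1/3 - 2*(3*(2*(r:ℝ)-1))⁻¹) atTop (𝓝 (1/3)) := by
    simpa using tendsto_const_nhds.sub (tendsto_aux.const_mul 2)
  have hU : Tendsto (fun r : ℕ => 1/3 + 2*(3*(2*(r:ℝ)-1))⁻¹) atTop (𝓝 (1/3)) := by
    simpa using tendsto_const_nhds.add (tendsto_aux.const_mul 2)
  apply tendsto_of_tendsto_of_tendsto_of_le_of_le' hL hU
  · filter_upwards [eventually_ge_atTop 1] with r hr
    have h := (Fsq_card r hr).1
    have hn : (1:ℝ) ≤ 2*(r:ℝ)-1 := by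
      have : (1:ℝ) ≤ (r:ℝ) := by exact_mod_cast hr
      linarith
    have h1 : (2*(r:ℝ)-1) * (2*(r:ℝ)-3) ≤ 3 * ((Fsq r).card : ℝ) := by exact_mod_cast h
    rw [Fsq_coe, Set.ncard_coe_finset]
    rw [le_div_iff₀ (by positivity)]
    have hne : (2*(r:ℝ)-1) ≠ 0 := by linarith
    have key : (1/3 - 2*(3*(2*(r:ℝ)-1))⁻¹) * (2*(r:ℝ)-1)^2
        = ((2*(r:ℝ)-1)*(2*(r:ℝ)-3))/3 := by
      field_simp; ring
    rw [key, div_le_iff₀ (by norm_num : (0:ℝ) < 3)]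
    linarith
  · filter_upwards [eventually_ge_atTop 1] with r hr
    have h := (Fsq_card r hr).2
    have hn : (1:ℝ) ≤ 2*(r:ℝ)-1 := by
      have : (1:ℝ) ≤ (r:ℝ) := by exact_mod_cast hr
      linarith
    have h2 : 3 * ((Fsq r).card : ℝ) ≤ (2*(r:ℝ)-1) * (2*(r:ℝ)+1) := by exact_mod_cast h
    rw [Fsq_coe, Set.ncard_coe_finset]
    rw [div_le_iff₀ (by positivity)]
    have hne : (2*(r:ℝ)-1) ≠ 0 := by linarith
    have key : (1/3 + 2*(3*(2*(r:ℝ)-1))⁻¹) * (2*(r:ℝ)-1)^2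
        = ((2*(r:ℝ)-1)*(2*(r:ℝ)+1))/3 := by
      field_simp; ring
    rw [key, le_div_iff₀ (by norm_num : (0:ℝ) < 3)]
    linarith

lemma indep_card_le (S : Set (ℤ × ℤ)) (hS : ∀ x ∈ S, ∀ y ∈ S, ¬ IsTriNbr x y) (r : ℕ) :
    (S ∩ box r).ncard ≤ (Fsq (r+1)).card := by
  classical
  set rep : ℤ × ℤ → ℤ × ℤ := fun x =>
    if (x.1 + x.2) % 3 = 0 then x
    else if (x.1 + x.2) % 3 = 1 then (x.1 - 1, x.2)
    else (x.1 - 1, x.2 - 1) with hrep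
  have hmaps : ∀ x ∈ S ∩ box r, rep x ∈ ({x : ℤ × ℤ | 3 ∣ (x.1 + x.2)} ∩ box (r+1)) := by
    rintro x ⟨-, hx1, hx2⟩
    rw [abs_lt] at hx1 hx2
    simp only [hrep]
    split_ifs with h0 h1 <;>
      (refine ⟨by simp only [Set.mem_setOf_eq]; omega, ?_, ?_⟩ <;> (rw [abs_lt]; push_cast; omega))
  have hinj : Set.InjOn rep (S ∩ box r) := by
    intro x hx y hy h
    by_contra hne
    apply hS x hx.1 y hy.1
    have hne2 : x.1 ≠ y.1 ∨ x.2 ≠ y.2 := by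
      by_contra hc
      push_neg at hc
      exact hne (Prod.ext hc.1 hc.2)
    simp only [hrep] at h
    simp only [IsTriNbr, Set.mem_insert_iff, Set.mem_singleton_iff, Prod.ext_iff,
      Prod.fst_sub, Prod.snd_sub]
    split_ifs at h <;>
      (rw [Prod.ext_iff] at h; obtain ⟨h4, h5⟩ := h; rcases hne2 with hne2 | hne2 <;> omega)
  calc (S ∩ box r).ncard = (rep '' (S ∩ box r)).ncard := (Set.ncard_image_of_injOn hinj).symm
    _ ≤ (↑(Fsq (r+1)) : Set (ℤ × ℤ)).ncard :=
        Set.ncard_le_ncard (by rw [← Fsq_coe]; exact Set.image_subset_iff.mpr hmaps)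
          (Fsq (r+1)).finite_toSet
    _ = (Fsq (r+1)).card := Set.ncard_coe_finset _

lemma upper_bound (S : Set (ℤ × ℤ)) (hS : ∀ x ∈ S, ∀ y ∈ S, ¬ IsTriNbr x y) :
    upperDensity S ≤ 1 / 3 := by
  have hU : Tendsto (fun r : ℕ => 1/3 + 14*(3*(2*(r:ℝ)-1))⁻¹) atTop (𝓝 (1/3)) := by
    simpa using tendsto_const_nhds.add (tendsto_aux.const_mul 14)
  have hev : (fun r : ℕ => (Set.ncard (S ∩ box r) : ℝ) / (2 * (r : ℝ) - 1) ^ 2) ≤ᶠ[atTop]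
      (fun r : ℕ => 1/3 + 14*(3*(2*(r:ℝ)-1))⁻¹) := by
    filter_upwards [eventually_ge_atTop 1] with r hr
    have hcard := indep_card_le S hS r
    have h2 := (Fsq_card (r+1) (by omega)).2
    have hn : (1:ℝ) ≤ (r:ℝ) := by exact_mod_cast hr
    have hc : (Set.ncard (S ∩ box r) : ℝ) ≤ ((Fsq (r+1)).card : ℝ) := by exact_mod_cast hcard
    have h2' : 3 * ((Fsq (r+1)).card : ℝ) ≤ (2*(r:ℝ)+1) * (2*(r:ℝ)+3) := by
      have h3 : (3:ℝ) * ((Fsq (r+1)).card : ℝ) ≤ (2*((r:ℝ)+1)-1) * (2*((r:ℝ)+1)+1) := by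
        exact_mod_cast h2
      nlinarith [h3]
    show (Set.ncard (S ∩ box r) : ℝ) / (2 * (r : ℝ) - 1) ^ 2 ≤ 1/3 + 14*(3*(2*(r:ℝ)-1))⁻¹
    rw [div_le_iff₀ (by nlinarith : (0:ℝ) < (2*(r:ℝ)-1)^2)]
    have hne : (2*(r:ℝ)-1) ≠ 0 := by linarith
    have key : (1/3 + 14*(3*(2*(r:ℝ)-1))⁻¹) * (2*(r:ℝ)-1)^2
        = ((2*(r:ℝ)-1)^2 + 14*(2*(r:ℝ)-1))/3 := by field_simp
    rw [key, le_div_iff₀ (by norm_num : (0:ℝ) < 3)]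
    nlinarith [hc, h2', hn]
  have hcob : IsCoboundedUnder (· ≤ ·) atTop
      (fun r : ℕ => (Set.ncard (S ∩ box r) : ℝ) / (2 * (r : ℝ) - 1) ^ 2) :=
    Filter.isCoboundedUnder_le_of_le atTop (x := 0) (fun r => by positivity)
  calc upperDensity S
      ≤ limsup (fun r : ℕ => 1/3 + 14*(3*(2*(r:ℝ)-1))⁻¹) atTop :=
        limsup_le_limsup hev hcob hU.isBoundedUnder_le
    _ = 1/3 := hU.limsup_eq

theorem delta6_zero :
    (∀ S : Set (ℤ × ℤ), (∀ x ∈ S, ∀ y ∈ S, ¬ IsTriNbr x y) → upperDensity S ≤ 1 / 3) ∧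
    (∀ x ∈ {x : ℤ × ℤ | 3 ∣ (x.1 + x.2)}, ∀ y ∈ {x : ℤ × ℤ | 3 ∣ (x.1 + x.2)},
      ¬ IsTriNbr x y) ∧
    HasDensity {x : ℤ × ℤ | 3 ∣ (x.1 + x.2)} (1 / 3) := by
  refine ⟨upper_bound, ?_, hasDensity_third⟩
  intro x hx y hy hnbr
  simp only [Set.mem_setOf_eq] at hx hy
  simp only [IsTriNbr, Set.mem_insert_iff, Set.mem_singleton_iff, Prod.ext_iff,
    Prod.fst_sub, Prod.snd_sub] at hnbr
  omega
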